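/- Weyl's perturbation theorem for singular values: if A and B = A + E are complex matrices of the same size with singular values \sigma_1 \ge \sigma_2 \ge ... and \sigma_1^\epsilon \ge \sigma_2^\epsilon \ge ... respectively, then |\sigma_j^\epsilon - \sigma_j| \le \|E\|_2 for every j, where \|E\|_2 is the spectral norm. -/

import Mathlib

open scoped Real BigOperators
open Matrix

/-- The spectral (operator) norm of a complex matrix. -/
noncomputable def sNorm {m n : ℕ} (A : Matrix (Fin m) (Fin n) ℂ) : ℝ :=
  ‖LinearMap.toContinuousLinearMap (Matrix.toEuclideanLin A)‖

/-- The singular values of a complex matrix, in decreasing order: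
`svals A j` is the `(j+1)`-st largest singular value, obtained by sorting the
square roots of the eigenvalues of `Aᴴ * A` in decreasing order. -/
noncomputable def svals {m n : ℕ} (A : Matrix (Fin m) (Fin n) ℂ) : Fin n → ℝ :=
  fun j =>
    Real.sqrt ((Matrix.isHermitian_conjTranspose_mul_self A).eigenvalues
      (Tuple.sort (Matrix.isHermitian_conjTranspose_mul_self A).eigenvalues j.rev))

namespace WeylAux

variable {m n : ℕ}

lemma repr_diag (A : Matrix (Fin m) (Fin n) ℂ) (x : EuclideanSpace ℂ (Fin n)) (i : Fin n) :
    (Matrix.isHermitian_conjTranspose_mul_self A).eigenvectorBasis.repr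
      (Matrix.toEuclideanLin (Aᴴ * A) x) i
    = (Matrix.isHermitian_conjTranspose_mul_self A).eigenvalues i
      * (Matrix.isHermitian_conjTranspose_mul_self A).eigenvectorBasis.repr x i := by
  set hH := Matrix.isHermitian_conjTranspose_mul_self A with hdef
  set b := hH.eigenvectorBasis with bdef
  have key : ∀ j, Matrix.toEuclideanLin (Aᴴ * A) (b j)
      = (hH.eigenvalues j : ℂ) • b j := by
    intro j
    ext k
    have := congrFun (hH.mulVec_eigenvectorBasis j) k
    simpa [Matrix.toEuclideanLin_apply, Complex.real_smul] using this
  conv_lhs => rw [← b.sum_repr x, map_sum, map_sum]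
  simp only [_root_.map_smul, key, b.repr_self]
  rw [WithLp.ofLp_sum, Finset.sum_apply]
  rw [Finset.sum_eq_single i]
  · simp [mul_comm]
  · intro j _ hj
    simp [EuclideanSpace.single_apply, hj.symm]
  · simp

lemma norm_sq_eq (A : Matrix (Fin m) (Fin n) ℂ) (x : EuclideanSpace ℂ (Fin n)) :
    ‖Matrix.toEuclideanLin A x‖ ^ 2
      = ∑ i, (Matrix.isHermitian_conjTranspose_mul_self A).eigenvalues i
          * ‖(Matrix.isHermitian_conjTranspose_mul_self A).eigenvectorBasis.repr x i‖ ^ 2 := by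
  set hH := Matrix.isHermitian_conjTranspose_mul_self A with hdef
  set b := hH.eigenvectorBasis with bdef
  have hinner : (inner ℂ (Matrix.toEuclideanLin A x) (Matrix.toEuclideanLin A x) : ℂ)
      = inner ℂ x (Matrix.toEuclideanLin (Aᴴ * A) x) := by
    simp only [EuclideanSpace.inner_eq_star_dotProduct, Matrix.ofLp_toEuclideanLin_apply,
      Matrix.star_mulVec, ← Matrix.mulVec_mulVec, Matrix.dotProduct_mulVec]
    rw [dotProduct_comm, ← dotProduct_mulVec, dotProduct_comm]
  have h1 : ‖Matrix.toEuclideanLin A x‖ ^ 2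
      = RCLike.re (inner ℂ x (Matrix.toEuclideanLin (Aᴴ * A) x) : ℂ) := by
    rw [← hinner]
    exact (inner_self_eq_norm_sq _).symm
  rw [h1]
  rw [← b.repr.inner_map_map x (Matrix.toEuclideanLin (Aᴴ * A) x)]
  rw [PiLp.inner_apply]
  rw [map_sum]
  refine Finset.sum_congr rfl fun i _ => ?_
  rw [repr_diag]
  rw [← hdef, ← bdef]
  simp only [RCLike.inner_apply']
  rw [show (starRingEnd ℂ) (b.repr x i) * (↑(hH.eigenvalues i) * b.repr x i)
      = (hH.eigenvalues i : ℂ) * ((starRingEnd ℂ) (b.repr x i) * b.repr x i) by ring]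
  rw [RCLike.conj_mul, ← RCLike.ofReal_pow]
  simp only [RCLike.re_to_complex]
  rw [Complex.re_ofReal_mul]
  simp only [mul_eq_mul_left_iff]
  exact Or.inl (Complex.ofReal_re _)

lemma norm_sq_repr (b : OrthonormalBasis (Fin n) ℂ (EuclideanSpace ℂ (Fin n)))
    (x : EuclideanSpace ℂ (Fin n)) : ‖x‖ ^ 2 = ∑ i, ‖b.repr x i‖ ^ 2 := by
  rw [← b.repr.norm_map x, EuclideanSpace.norm_eq, Real.sq_sqrt]
  positivity

lemma repr_support (b : OrthonormalBasis (Fin n) ℂ (EuclideanSpace ℂ (Fin n)))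
    (t : Finset (Fin n)) {x : EuclideanSpace ℂ (Fin n)}
    (hx : x ∈ Submodule.span ℂ (⇑b '' ↑t)) {i : Fin n} (hi : i ∉ t) : b.repr x i = 0 := by
  induction hx using Submodule.span_induction with
  | mem y hy =>
      obtain ⟨j, hj, rfl⟩ := hy
      rw [b.repr_self, EuclideanSpace.single_apply]
      simp only [ite_eq_right_iff]
      rintro rfl
      exact absurd hj hi
  | zero => simp
  | add y z _ _ hy hz => rw [map_add]; simp [hy, hz]
  | smul c y _ hy => rw [_root_.map_smul]; simp [hy]

lemma finrank_span (b : OrthonormalBasis (Fin n) ℂ (EuclideanSpace ℂ (Fin n)))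
    (t : Finset (Fin n)) :
    Module.finrank ℂ (Submodule.span ℂ (⇑b '' ↑t)) = t.card := by
  classical
  have hli0 : LinearIndependent ℂ (fun x : (↑t : Set (Fin n)) => b x) :=
    b.orthonormal.linearIndependent.comp _ Subtype.val_injective
  have hli := LinearIndepOn.id_image (v := ⇑b) (s := (↑t : Set (Fin n))) hli0
  rw [finrank_span_set_eq_card hli, Set.toFinset_image]
  rw [show (↑t : Set (Fin n)).toFinset = t from t.toFinset_coe]
  exact Finset.card_image_of_injective _ b.toBasis.injective

lemma exists_ne_zero_mem_inf {V W : Submodule ℂ (EuclideanSpace ℂ (Fin n))}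
    (h : n < Module.finrank ℂ V + Module.finrank ℂ W) :
    ∃ x, x ≠ 0 ∧ x ∈ V ∧ x ∈ W := by
  have h1 := Submodule.finrank_sup_add_finrank_inf_eq V W
  have h2 : Module.finrank ℂ ↥(V ⊔ W) ≤ n := by
    have := Submodule.finrank_le (V ⊔ W)
    simpa using this
  have h3 : 0 < Module.finrank ℂ ↥(V ⊓ W) := by omega
  have h4 : V ⊓ W ≠ ⊥ := by
    intro hbot
    rw [hbot, finrank_bot] at h3
    exact lt_irrefl 0 h3
  obtain ⟨x, hx, hx0⟩ := Submodule.exists_mem_ne_zero_of_ne_bot h4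
  exact ⟨x, hx0, hx.1, hx.2⟩

lemma eig_nonneg (A : Matrix (Fin m) (Fin n) ℂ) (i : Fin n) :
    0 ≤ (Matrix.isHermitian_conjTranspose_mul_self A).eigenvalues i :=
  Matrix.eigenvalues_conjTranspose_mul_self_nonneg A i

lemma lower (A : Matrix (Fin m) (Fin n) ℂ) (k : Fin n) :
    ∃ V : Submodule ℂ (EuclideanSpace ℂ (Fin n)),
      Module.finrank ℂ V = n - (k : ℕ) ∧
      ∀ x ∈ V, Real.sqrt ((Matrix.isHermitian_conjTranspose_mul_self A).eigenvalues
          (Tuple.sort (Matrix.isHermitian_conjTranspose_mul_self A).eigenvalues k)) * ‖x‖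
        ≤ ‖Matrix.toEuclideanLin A x‖ := by
  classical
  set hH := Matrix.isHermitian_conjTranspose_mul_self A with hHdef
  set b := hH.eigenvectorBasis with bdef
  set σ := Tuple.sort hH.eigenvalues with σdef
  set t : Finset (Fin n) := (Finset.Ici k).image σ with tdef
  refine ⟨Submodule.span ℂ (⇑b '' ↑t), ?_, ?_⟩
  · rw [finrank_span, tdef, Finset.card_image_of_injective _ σ.injective, Fin.card_Ici]
  · intro x hx
    have hsupp : ∀ i ∉ t, b.repr x i = 0 := fun i hi => repr_support b t hx hi
    have key : hH.eigenvalues (σ k) * ‖x‖ ^ 2 ≤ ‖Matrix.toEuclideanLin A x‖ ^ 2 := by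
      rw [norm_sq_eq A x, norm_sq_repr b x, Finset.mul_sum, ← hHdef, ← bdef]
      refine Finset.sum_le_sum fun i _ => ?_
      by_cases hi : i ∈ t
      · rw [tdef] at hi
        obtain ⟨κ, hκ, rfl⟩ := Finset.mem_image.1 hi
        have hmono : hH.eigenvalues (σ k) ≤ hH.eigenvalues (σ κ) :=
          Tuple.monotone_sort hH.eigenvalues (Finset.mem_Ici.1 hκ)
        exact mul_le_mul_of_nonneg_right hmono (by positivity)
      · rw [hsupp i hi]
        simp
    have h0 : (0 : ℝ) ≤ Real.sqrt (hH.eigenvalues (σ k)) * ‖x‖ := by positivity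
    have h1 : (Real.sqrt (hH.eigenvalues (σ k)) * ‖x‖) ^ 2
        ≤ ‖Matrix.toEuclideanLin A x‖ ^ 2 := by
      rw [mul_pow, Real.sq_sqrt (eig_nonneg A _)]
      exact key
    calc Real.sqrt (hH.eigenvalues (σ k)) * ‖x‖
        = Real.sqrt ((Real.sqrt (hH.eigenvalues (σ k)) * ‖x‖) ^ 2) := (Real.sqrt_sq h0).symm
      _ ≤ Real.sqrt (‖Matrix.toEuclideanLin A x‖ ^ 2) := Real.sqrt_le_sqrt h1
      _ = ‖Matrix.toEuclideanLin A x‖ := Real.sqrt_sq (norm_nonneg _)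

lemma upper (A : Matrix (Fin m) (Fin n) ℂ) (k : Fin n)
    (V : Submodule ℂ (EuclideanSpace ℂ (Fin n))) (hV : n - (k : ℕ) ≤ Module.finrank ℂ V) :
    ∃ x : EuclideanSpace ℂ (Fin n), x ≠ 0 ∧ x ∈ V ∧
      ‖Matrix.toEuclideanLin A x‖
        ≤ Real.sqrt ((Matrix.isHermitian_conjTranspose_mul_self A).eigenvalues
            (Tuple.sort (Matrix.isHermitian_conjTranspose_mul_self A).eigenvalues k)) * ‖x‖ := by
  classical
  set hH := Matrix.isHermitian_conjTranspose_mul_self A with hHdef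
  set b := hH.eigenvectorBasis with bdef
  set σ := Tuple.sort hH.eigenvalues with σdef
  set t : Finset (Fin n) := (Finset.Iic k).image σ with tdef
  set W := Submodule.span ℂ (⇑b '' ↑t) with Wdef
  have hW : Module.finrank ℂ W = (k : ℕ) + 1 := by
    rw [Wdef, finrank_span, tdef, Finset.card_image_of_injective _ σ.injective, Fin.card_Iic]
  have hk : (k : ℕ) < n := k.isLt
  obtain ⟨x, hx0, hxV, hxW⟩ := exists_ne_zero_mem_inf (V := V) (W := W) (by omega)
  refine ⟨x, hx0, hxV, ?_⟩
  have hsupp : ∀ i ∉ t, b.repr x i = 0 := fun i hi => repr_support b t hxW hi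
  have key : ‖Matrix.toEuclideanLin A x‖ ^ 2 ≤ hH.eigenvalues (σ k) * ‖x‖ ^ 2 := by
    rw [norm_sq_eq A x, norm_sq_repr b x, Finset.mul_sum, ← hHdef, ← bdef]
    refine Finset.sum_le_sum fun i _ => ?_
    by_cases hi : i ∈ t
    · rw [tdef] at hi
      obtain ⟨κ, hκ, rfl⟩ := Finset.mem_image.1 hi
      have hmono : hH.eigenvalues (σ κ) ≤ hH.eigenvalues (σ k) :=
        Tuple.monotone_sort hH.eigenvalues (Finset.mem_Iic.1 hκ)
      exact mul_le_mul_of_nonneg_right hmono (by positivity)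
    · rw [hsupp i hi]
      simp
  calc ‖Matrix.toEuclideanLin A x‖
      = Real.sqrt (‖Matrix.toEuclideanLin A x‖ ^ 2) := (Real.sqrt_sq (norm_nonneg _)).symm
    _ ≤ Real.sqrt (hH.eigenvalues (σ k) * ‖x‖ ^ 2) := Real.sqrt_le_sqrt key
    _ = Real.sqrt (hH.eigenvalues (σ k)) * ‖x‖ := by
        rw [Real.sqrt_mul (eig_nonneg A _), Real.sqrt_sq (norm_nonneg _)]

lemma opE_bound (E : Matrix (Fin m) (Fin n) ℂ) (x : EuclideanSpace ℂ (Fin n)) :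
    ‖Matrix.toEuclideanLin E x‖ ≤ sNorm E * ‖x‖ := by
  have := (LinearMap.toContinuousLinearMap (Matrix.toEuclideanLin E)).le_opNorm x
  simpa [sNorm] using this

lemma one_sided (A E : Matrix (Fin m) (Fin n) ℂ) (j : Fin n) :
    svals A j ≤ svals (A + E) j + sNorm E := by
  obtain ⟨V, hVrank, hVlow⟩ := lower A j.rev
  obtain ⟨x, hx0, hxV, hxup⟩ := upper (A + E) j.rev V hVrank.ge
  have hnorm : 0 < ‖x‖ := norm_pos_iff.2 hx0
  have h1 : svals A j * ‖x‖ ≤ ‖Matrix.toEuclideanLin A x‖ := hVlow x hxV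
  have h2 : ‖Matrix.toEuclideanLin (A + E) x‖ ≤ svals (A + E) j * ‖x‖ := hxup
  have hsub : ‖Matrix.toEuclideanLin A x‖
      ≤ ‖Matrix.toEuclideanLin (A + E) x‖ + ‖Matrix.toEuclideanLin E x‖ := by
    have hadd : Matrix.toEuclideanLin A x
        = Matrix.toEuclideanLin (A + E) x - Matrix.toEuclideanLin E x := by
      rw [map_add]
      simp
    rw [hadd]
    exact norm_sub_le _ _
  have hEx := opE_bound E x
  have : svals A j * ‖x‖ ≤ (svals (A + E) j + sNorm E) * ‖x‖ := by
    rw [add_mul]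
    linarith
  exact le_of_mul_le_mul_right this hnorm

lemma sNorm_neg (E : Matrix (Fin m) (Fin n) ℂ) : sNorm (-E) = sNorm E := by
  unfold sNorm
  rw [map_neg, map_neg, norm_neg]

end WeylAux

theorem stmt7 (m n : ℕ) (A E : Matrix (Fin m) (Fin n) ℂ) (j : Fin n) :
    |svals (A + E) j - svals A j| ≤ sNorm E := by
  rw [abs_sub_le_iff]
  constructor
  · have h := WeylAux.one_sided (A + E) (-E) j
    rw [show A + E + -E = A from add_neg_cancel_right A E, WeylAux.sNorm_neg] at h
    linarith
  · have h := WeylAux.one_sided A E j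
    linarith
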